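/- arXiv:1109.5965 — 3 statements merged into one kernel-verified Lean document; each statement's English description precedes it below -/
import Mathlib

section
/- Let h : ℝ × ℂ² → ℂ be such that for each s, h(s, ·) is a polynomial in (z₁, z₂), h(0, z₁, z₂) = 0 for all z, h is differentiable in s, and h(t+s, z₁, z₂) = h(s, z₁, z₂) + h(t, z₁ + s, e^{bs}z₂) for all s, t ∈ ℝ, z ∈ ℂ² (where b ∈ ℂ is fixed). Then there exists a polynomial q ∈ ℂ[z₁, z₂] with h(s, z₁, z₂) = q(z₁ + s, e^{bs}z₂) − q(z₁, z₂). -/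
open MvPolynomial

/-! ### Auxiliary algebra: the vector field operator `Dop` and its surjectivity -/

noncomputable def Dop (b : ℂ) (p : MvPolynomial (Fin 2) ℂ) : MvPolynomial (Fin 2) ℂ :=
  pderiv 0 p + b • (X 1 * pderiv 1 p)

lemma Dop_add (b : ℂ) (p q : MvPolynomial (Fin 2) ℂ) : Dop b (p + q) = Dop b p + Dop b q := by
  simp [Dop, mul_add, smul_add]; ring

lemma Dop_smul (b c : ℂ) (p : MvPolynomial (Fin 2) ℂ) : Dop b (c • p) = c • Dop b p := by
  simp [Dop, smul_smul, mul_comm c b]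

lemma Dop_sub (b : ℂ) (p q : MvPolynomial (Fin 2) ℂ) : Dop b (p - q) = Dop b p - Dop b q := by
  simp [Dop, mul_sub, smul_sub]; ring

lemma Dop_C (b a : ℂ) : Dop b (C a : MvPolynomial (Fin 2) ℂ) = 0 := by simp [Dop]

lemma Dop_mono (b : ℂ) (k l : ℕ) :
    Dop b (X 0 ^ k * X 1 ^ l)
      = (k : ℂ) • (X 0 ^ (k - 1) * X 1 ^ l) + (b * l) • (X 0 ^ k * X 1 ^ l) := by
  have h1 : pderiv (R := ℂ) (0 : Fin 2) (X 1 ^ l) = 0 := by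
    simp [pderiv_pow, pderiv_X_of_ne (by decide : (1 : Fin 2) ≠ 0)]
  have h0 : pderiv (R := ℂ) (1 : Fin 2) (X 0 ^ k) = 0 := by
    simp [pderiv_pow, pderiv_X_of_ne (by decide : (0 : Fin 2) ≠ 1)]
  simp only [Dop, pderiv_mul, pderiv_pow, pderiv_X_self, h1, h0, mul_one, mul_zero, add_zero,
    zero_add, zero_mul, Nat.cast_smul_eq_nsmul, nsmul_eq_mul, smul_eq_C_mul, map_mul, map_natCast]
  cases l with
  | zero => simp
  | succ m => simp only [Nat.add_sub_cancel, pow_succ]; push_cast; ring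

noncomputable def auxQ (b : ℂ) (l : ℕ) : ℕ → MvPolynomial (Fin 2) ℂ
  | 0 => (b * l)⁻¹ • (X 1 ^ l)
  | (k+1) => (b * l)⁻¹ • (X 0 ^ (k+1) * X 1 ^ l) - (((k:ℂ)+1) * (b * l)⁻¹) • auxQ b l k

lemma Dop_auxQ (b : ℂ) (l : ℕ) (hbl : b * (l:ℂ) ≠ 0) (k : ℕ) :
    Dop b (auxQ b l k) = X 0 ^ k * X 1 ^ l := by
  induction k with
  | zero =>
      have : (X 1 ^ l : MvPolynomial (Fin 2) ℂ) = X 0 ^ 0 * X 1 ^ l := by ring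
      rw [auxQ, Dop_smul, this, Dop_mono]
      simp only [smul_smul, zero_smul, zero_add, Nat.cast_zero]
      rw [inv_mul_cancel₀ hbl, one_smul]
      ring
  | succ k ih =>
      rw [auxQ, Dop_sub, Dop_smul, Dop_smul, Dop_mono, ih]
      simp only [Nat.add_sub_cancel, smul_add, smul_smul, push_cast]
      rw [inv_mul_cancel₀ hbl]
      rw [mul_comm ((k:ℂ)+1) (b * l)⁻¹]
      simp [smul_smul]

lemma exists_Dop_mono (b : ℂ) (k l : ℕ) :
    ∃ q : MvPolynomial (Fin 2) ℂ, Dop b q = X 0 ^ k * X 1 ^ l := by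
  by_cases hbl : b * (l:ℂ) = 0
  · refine ⟨((k:ℂ)+1)⁻¹ • (X 0 ^ (k+1) * X 1 ^ l), ?_⟩
    rw [Dop_smul, Dop_mono, hbl]
    simp only [Nat.add_sub_cancel, zero_smul, add_zero, smul_smul]
    push_cast
    rw [inv_mul_cancel₀ (Nat.cast_add_one_ne_zero k), one_smul]
  · exact ⟨auxQ b l k, Dop_auxQ b l hbl k⟩

lemma Dop_surjective (b : ℂ) (p : MvPolynomial (Fin 2) ℂ) :
    ∃ q : MvPolynomial (Fin 2) ℂ, Dop b q = p := by
  induction p using MvPolynomial.induction_on' with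
  | add p q hp hq =>
      obtain ⟨qp, hqp⟩ := hp; obtain ⟨qq, hqq⟩ := hq
      exact ⟨qp + qq, by rw [Dop_add, hqp, hqq]⟩
  | monomial u a =>
      obtain ⟨q, hq⟩ := exists_Dop_mono b (u 0) (u 1)
      refine ⟨a • q, ?_⟩
      rw [Dop_smul, hq, monomial_eq]
      rw [smul_eq_C_mul]
      congr 1
      rw [Finsupp.prod_fintype _ _ (fun i => pow_zero _)]
      simp [Fin.prod_univ_two]

/-! ### The derivative of a polynomial along the flow -/

lemma Dop_mul_X (b : ℂ) (p : MvPolynomial (Fin 2) ℂ) (i : Fin 2) :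
    Dop b (p * X i) = Dop b p * X i + p * Dop b (X i) := by
  simp only [Dop, pderiv_mul, smul_eq_C_mul]; ring

lemma Dop_X0 (b : ℂ) : Dop b (X 0 : MvPolynomial (Fin 2) ℂ) = 1 := by
  simp [Dop, pderiv_X_self, pderiv_X_of_ne (by decide : (0:Fin 2) ≠ 1)]

lemma Dop_X1 (b : ℂ) : Dop b (X 1 : MvPolynomial (Fin 2) ℂ) = b • X 1 := by
  simp [Dop, pderiv_X_self, pderiv_X_of_ne (by decide : (1:Fin 2) ≠ 0)]

lemma hasDerivAt_flow (b : ℂ) (q : MvPolynomial (Fin 2) ℂ) (z₁ z₂ : ℂ) (s : ℝ) :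
    HasDerivAt (fun s : ℝ => eval ![z₁ + s, Complex.exp (b * s) * z₂] q)
      (eval ![z₁ + s, Complex.exp (b * s) * z₂] (Dop b q)) s := by
  have hv0 : HasDerivAt (fun s : ℝ => z₁ + (s : ℂ)) 1 s := by
    simpa using ((hasDerivAt_id ((s : ℝ) : ℂ)).comp_ofReal).const_add z₁
  have hv1 : HasDerivAt (fun s : ℝ => Complex.exp (b * s) * z₂)
      (b * (Complex.exp (b * s) * z₂)) s := by
    have h2 := ((((hasDerivAt_id ((s : ℝ) : ℂ)).const_mul b).cexp).comp_ofReal (z := s)).mul_const z₂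
    exact h2.congr_deriv (by simp only [id_eq]; ring)
  induction q using MvPolynomial.induction_on with
  | C a => simpa [Dop_C] using hasDerivAt_const s a
  | add p q hp hq =>
      simp only [eval_add, Dop_add]
      exact hp.add hq
  | mul_X p i hp =>
      by_cases hi : i = 0
      · subst hi
        have h3 := hp.mul hv0
        rw [Dop_mul_X, Dop_X0]
        simp only [eval_add, eval_mul, eval_X, map_one, Matrix.cons_val_zero]
        exact h3.congr_deriv (by ring)
      · have hi1 : i = 1 := by omega
        subst hi1
        have h3 := hp.mul hv1
        rw [Dop_mul_X, Dop_X1]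
        simp only [eval_add, eval_mul, eval_X, smul_eq_C_mul, eval_C, Matrix.cons_val_one,
          Matrix.head_cons]
        exact h3.congr_deriv (by simp)

/-! ### Composition of evaluations -/

lemma eval_aeval' (x : Fin 2 → ℂ) (p : MvPolynomial (Fin 2) ℂ)
    (f : Fin 2 → MvPolynomial (Fin 2) ℂ) :
    eval x (aeval f p) = eval (fun i => eval x (f i)) p := by
  induction p using MvPolynomial.induction_on with
  | C a => simp
  | add p q hp hq => rw [map_add, eval_add, hp, hq, eval_add]
  | mul_X p i hp => rw [map_mul, eval_mul, hp, aeval_X, eval_mul, eval_X]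

/-! ### Finite-dimensional spaces of polynomial functions -/

noncomputable def genF (N : ℕ) : (Fin 2 → Fin (N+1)) → (ℂ → ℂ → ℂ) :=
  fun e z₁ z₂ => z₁ ^ (e 0 : ℕ) * z₂ ^ (e 1 : ℕ)

noncomputable def WN (N : ℕ) : Submodule ℂ (ℂ → ℂ → ℂ) :=
  Submodule.span ℂ (Set.range (genF N))

instance (N : ℕ) : FiniteDimensional ℂ (WN N) :=
  FiniteDimensional.span_of_finite ℂ (Set.finite_range _)

lemma WN_closed (N : ℕ) : IsClosed (WN N : Set (ℂ → ℂ → ℂ)) :=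
  Submodule.closed_of_finiteDimensional _

lemma mem_WN (N : ℕ) (p : MvPolynomial (Fin 2) ℂ)
    (hdeg : ∀ d ∈ p.support, d 0 ≤ N ∧ d 1 ≤ N) :
    (fun z₁ z₂ => eval ![z₁, z₂] p) ∈ WN N := by
  classical
  have hlt : ∀ (d : Fin 2 →₀ ℕ), d ∈ p.support → ∀ i : Fin 2, d i < N + 1 := by
    intro d hd i
    rcases hdeg d hd with ⟨h1, h2⟩
    by_cases hi : i = 0
    · subst hi; omega
    · have : i = 1 := by omega
      subst this; omega
  have hfun : (fun z₁ z₂ => eval ![z₁, z₂] p)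
      = ∑ d ∈ p.support.attach,
          coeff d.1 p • genF N (fun i => ⟨d.1 i, hlt d.1 d.2 i⟩) := by
    funext z₁ z₂
    simp only [Finset.sum_apply, Pi.smul_apply, smul_eq_mul, genF]
    rw [eval_eq']
    rw [← Finset.sum_attach p.support
      (fun d => coeff d p * ∏ i, (![z₁, z₂] : Fin 2 → ℂ) i ^ d i)]
    congr 1
    funext d
    congr 1
    rw [Fin.prod_univ_two]
    simp
  rw [hfun]
  apply Submodule.sum_mem
  intro d hd
  exact Submodule.smul_mem _ _ (Submodule.subset_span ⟨_, rfl⟩)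

lemma WN_poly (N : ℕ) (f : ℂ → ℂ → ℂ) (hf : f ∈ WN N) :
    ∃ p : MvPolynomial (Fin 2) ℂ, ∀ z₁ z₂, f z₁ z₂ = eval ![z₁, z₂] p := by
  refine Submodule.span_induction ?_ ?_ ?_ ?_ hf
  · rintro x ⟨e, rfl⟩
    exact ⟨X 0 ^ (e 0 : ℕ) * X 1 ^ (e 1 : ℕ), fun z₁ z₂ => by simp [genF]⟩
  · exact ⟨0, fun z₁ z₂ => by simp⟩
  · rintro x y _ _ ⟨px, hpx⟩ ⟨py, hpy⟩
    exact ⟨px + py, fun z₁ z₂ => by simp [Pi.add_apply, hpx z₁ z₂, hpy z₁ z₂]⟩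
  · rintro a x _ ⟨px, hpx⟩
    exact ⟨C a * px, fun z₁ z₂ => by simp [Pi.smul_apply, hpx z₁ z₂]⟩

/-! ### Main theorem -/

/-- Determination of the third component of a one-parameter subgroup commuting with
the canonical translation group, over the flow `(z₁,z₂) ↦ (z₁+s, e^{bs}z₂)`:
a polynomial cocycle `h` with `h(0,·) = 0` has the form
`h(s,z₁,z₂) = q(z₁+s, e^{bs}z₂) − q(z₁,z₂)` for a polynomial `q`. -/
theorem statement14 (b : ℂ) (h : ℝ → ℂ → ℂ → ℂ)
    (hpoly : ∀ s : ℝ, ∃ q : MvPolynomial (Fin 2) ℂ, ∀ z₁ z₂ : ℂ,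
      h s z₁ z₂ = MvPolynomial.eval ![z₁, z₂] q)
    (h0 : ∀ z₁ z₂ : ℂ, h 0 z₁ z₂ = 0)
    (hdiff : ∀ z₁ z₂ : ℂ, Differentiable ℝ fun s => h s z₁ z₂)
    (hcoc : ∀ (s t : ℝ) (z₁ z₂ : ℂ),
      h (t + s) z₁ z₂ = h s z₁ z₂ + h t (z₁ + s) (Complex.exp (b * s) * z₂)) :
    ∃ q : MvPolynomial (Fin 2) ℂ, ∀ (s : ℝ) (z₁ z₂ : ℂ),
      h s z₁ z₂ = MvPolynomial.eval ![z₁ + s, Complex.exp (b * s) * z₂] q -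
        MvPolynomial.eval ![z₁, z₂] q := by
  classical
  -- the map `s ↦ h s` into the function space is continuous
  have hφcont : Continuous (fun s : ℝ => h s) := by
    apply continuous_pi; intro z₁; apply continuous_pi; intro z₂
    exact (hdiff z₁ z₂).continuous
  -- Baire category: some `WN N` contains `h s` for all `s` in a ball
  have hcover : (⋃ N : ℕ, (fun s : ℝ => h s) ⁻¹' (WN N : Set (ℂ → ℂ → ℂ))) = Set.univ := by
    apply Set.eq_univ_of_forall
    intro s
    obtain ⟨p, hp⟩ := hpoly s
    refine Set.mem_iUnion.2 ⟨p.totalDegree, ?_⟩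
    simp only [Set.mem_preimage, SetLike.mem_coe]
    have : (fun z₁ z₂ => eval ![z₁, z₂] p) ∈ WN p.totalDegree := by
      apply mem_WN
      intro d hd
      have hsum := MvPolynomial.le_totalDegree hd
      have h2 : ∀ i : Fin 2, d i ≤ d.sum fun _ e => e := by
        intro i
        by_cases hi : d i = 0
        · simp [hi]
        · exact Finset.single_le_sum (f := fun i => d i) (fun _ _ => Nat.zero_le _)
            (Finsupp.mem_support_iff.2 hi)
      exact ⟨le_trans (h2 0) hsum, le_trans (h2 1) hsum⟩
    have heq : (fun z₁ z₂ => h s z₁ z₂) = fun z₁ z₂ => eval ![z₁, z₂] p := by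
      funext z₁ z₂; exact hp z₁ z₂
    simpa [← heq] using this
  obtain ⟨N, hN⟩ := nonempty_interior_of_iUnion_of_closed
    (fun N : ℕ => (WN_closed N).preimage hφcont) hcover
  obtain ⟨s₀, hs₀⟩ := hN
  obtain ⟨ε, hε, hball⟩ := Metric.isOpen_iff.1 isOpen_interior s₀ hs₀
  have hballE : ∀ t : ℝ, |t - s₀| < ε → h t ∈ WN N := by
    intro t ht
    have h1 : t ∈ Metric.ball s₀ ε := by simpa [Real.dist_eq] using ht
    have h2 := interior_subset (hball h1)
    simpa using h2
  -- the translated space W'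
  set c : ℂ := Complex.exp (b * s₀) with hc
  have hcne : c ≠ 0 := Complex.exp_ne_zero _
  let S : (ℂ → ℂ → ℂ) →ₗ[ℂ] (ℂ → ℂ → ℂ) :=
    { toFun := fun f z₁ z₂ => f (z₁ - s₀) (c⁻¹ * z₂)
      map_add' := fun f g => rfl
      map_smul' := fun a f => rfl }
  let W' : Submodule ℂ (ℂ → ℂ → ℂ) := Submodule.map S (WN N)
  haveI : FiniteDimensional ℂ W' := Module.Finite.map (WN N) S
  have hW'closed : IsClosed (W' : Set (ℂ → ℂ → ℂ)) := Submodule.closed_of_finiteDimensional _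
  -- for small t, `h t ∈ W'`
  have hsmall : ∀ t : ℝ, |t| < ε → h t ∈ W' := by
    intro t ht
    refine ⟨h (t + s₀) - h s₀, ?_, ?_⟩
    · exact Submodule.sub_mem _ (hballE _ (by simpa using ht)) (hballE _ (by simpa using hε))
    · funext w₁ w₂
      have hthis := hcoc s₀ t (w₁ - s₀) (c⁻¹ * w₂)
      have hcc : c * (c⁻¹ * w₂) = w₂ := by field_simp
      rw [← hc] at hthis
      simp only [sub_add_cancel, hcc] at hthis
      simp only [S, LinearMap.coe_mk, AddHom.coe_mk, Pi.sub_apply]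
      rw [hthis]; ring
  -- the infinitesimal generator `g`
  set g : ℂ → ℂ → ℂ := fun z₁ z₂ => deriv (fun s => h s z₁ z₂) 0 with hgdef
  have hgW' : g ∈ W' := by
    have hu : Filter.Tendsto (fun n : ℕ => (1 / ((n : ℝ) + 1)))
        Filter.atTop (nhdsWithin (0:ℝ) {0}ᶜ) := by
      refine tendsto_nhdsWithin_of_tendsto_nhds_of_eventually_within _
        tendsto_one_div_add_atTop_nhds_zero_nat ?_
      filter_upwards with n
      have : (0:ℝ) < 1 / ((n : ℝ) + 1) := by positivity
      simpa using ne_of_gt this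
    have hslope : ∀ z₁ z₂ : ℂ, Filter.Tendsto
        (fun n : ℕ => ((((n : ℝ) + 1) : ℂ)) * h (1 / ((n : ℝ) + 1)) z₁ z₂)
        Filter.atTop (nhds (g z₁ z₂)) := by
      intro z₁ z₂
      have hd := hasDerivAt_iff_tendsto_slope.1 ((hdiff z₁ z₂ 0).hasDerivAt)
      have hcomp := hd.comp hu
      have heq : (fun n : ℕ => slope (fun s => h s z₁ z₂) 0 (1 / ((n : ℝ) + 1)))
          = fun n : ℕ => ((((n : ℝ) + 1) : ℂ)) * h (1 / ((n : ℝ) + 1)) z₁ z₂ := by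
        funext n
        rw [slope_def_module]
        simp only [vsub_eq_sub, sub_zero, h0, Complex.real_smul]
        rw [show ((1/((n:ℝ)+1))⁻¹ : ℝ) = (n:ℝ)+1 by rw [one_div, inv_inv]]
        push_cast
        ring
      rw [hgdef]
      rw [← heq]
      exact hcomp
    have htend : Filter.Tendsto
        (fun n : ℕ => ((((n : ℝ) + 1) : ℂ)) • h (1 / ((n : ℝ) + 1)))
        Filter.atTop (nhds g) := by
      rw [tendsto_pi_nhds]
      intro z₁
      rw [tendsto_pi_nhds]
      intro z₂
      simpa [Pi.smul_apply, smul_eq_mul] using hslope z₁ z₂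
    have hev : ∀ᶠ n : ℕ in Filter.atTop,
        ((((n : ℝ) + 1) : ℂ)) • h (1 / ((n : ℝ) + 1)) ∈ W' := by
      have hlt : ∀ᶠ n : ℕ in Filter.atTop, 1 / ((n : ℝ) + 1) < ε :=
        Filter.Tendsto.eventually_lt_const hε tendsto_one_div_add_atTop_nhds_zero_nat
      filter_upwards [hlt] with n hn
      have hpos : (0:ℝ) < 1 / ((n : ℝ) + 1) := by positivity
      have := hsmall (1 / ((n : ℝ) + 1)) (by rwa [abs_of_pos hpos])
      exact Submodule.smul_mem _ _ this
    exact hW'closed.mem_of_tendsto htend hev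
  obtain ⟨f, hfW, hfg⟩ := hgW'
  obtain ⟨p, hp⟩ := WN_poly N f hfW
  -- `g` is evaluation of a polynomial `qg`
  set qg : MvPolynomial (Fin 2) ℂ :=
    aeval ![X 0 - C ((s₀ : ℝ) : ℂ), C c⁻¹ * X 1] p with hqg
  have hg : ∀ z₁ z₂ : ℂ, g z₁ z₂ = eval ![z₁, z₂] qg := by
    intro z₁ z₂
    rw [hqg, eval_aeval']
    have h1 : (fun i => eval ![z₁, z₂] ((![X 0 - C ((s₀ : ℝ) : ℂ), C c⁻¹ * X 1] : Fin 2 → _) i))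
        = ![z₁ - s₀, c⁻¹ * z₂] := by
      funext i
      fin_cases i <;> simp
    rw [h1, ← hp]
    rw [← hfg]
    rfl
  -- solve `Dop b q = qg`
  obtain ⟨q, hDq⟩ := Dop_surjective b qg
  refine ⟨q, fun s z₁ z₂ => ?_⟩
  -- derivative of `s ↦ h s z₁ z₂`
  have hder : ∀ s : ℝ, HasDerivAt (fun s : ℝ => h s z₁ z₂)
      (g (z₁ + s) (Complex.exp (b * s) * z₂)) s := by
    intro s
    have k1 : HasDerivAt (fun t : ℝ => h t (z₁ + s) (Complex.exp (b * s) * z₂))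
        (g (z₁ + s) (Complex.exp (b * s) * z₂)) 0 := by
      rw [hgdef]
      exact (hdiff _ _ 0).hasDerivAt
    have k2 : (fun t : ℝ => h (t + s) z₁ z₂)
        = fun t : ℝ => h s z₁ z₂ + h t (z₁ + s) (Complex.exp (b * s) * z₂) := by
      funext t; exact hcoc s t z₁ z₂
    have k3 : HasDerivAt (fun t : ℝ => h (t + s) z₁ z₂)
        (g (z₁ + s) (Complex.exp (b * s) * z₂)) 0 := by
      rw [k2]; exact k1.const_add _
    have k3' : HasDerivAt (fun t : ℝ => h (t + s) z₁ z₂)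
        (g (z₁ + s) (Complex.exp (b * s) * z₂)) (s - s) := by
      rw [sub_self]; exact k3
    have k5 := HasDerivAt.comp_sub_const s s k3'
    simp only [sub_add_cancel] at k5
    exact k5
  -- the difference is constant
  have hu' : ∀ s : ℝ, HasDerivAt
      (fun s : ℝ => h s z₁ z₂ - eval ![z₁ + s, Complex.exp (b * s) * z₂] q) 0 s := by
    intro s
    have hsub := (hder s).sub (hasDerivAt_flow b q z₁ z₂ s)
    have e0 : g (z₁ + s) (Complex.exp (b * s) * z₂)
        - eval ![z₁ + s, Complex.exp (b * s) * z₂] (Dop b q) = 0 := by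
      rw [hg, hDq]; ring
    rwa [e0] at hsub
  have hconst := is_const_of_deriv_eq_zero
    (fun x => ((hu' x).differentiableAt : DifferentiableAt ℝ _ x))
    (fun x => (hu' x).deriv) s 0
  simp only [h0, Complex.ofReal_zero, mul_zero, Complex.exp_zero, one_mul, add_zero,
    zero_sub] at hconst
  linear_combination hconst
end

section
/- Let S_s(z₁, z₂) = (z₁, e^{bs}z₂) with b ∈ ℂ*, and let R : ℝ → Aut(ℂ²) be a one-parameter group of polynomial automorphisms commuting with every S_s. Then for each t, R_t has the form R_t(z₁, z₂) = (p_t(z₁), q_t·z₂) where p_t(z₁) = a(t)·z₁ + c(t) is affine in z₁ (with a(t) ∈ ℂ*) and q_t ∈ ℂ*. -/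
open Polynomial in
lemma aux_exp_roots (b : ℂ) (hb : b ≠ 0) (q : Polynomial ℂ)
    (h : ∀ s : ℝ, q.eval (Complex.exp (b * s)) = 0) : q = 0 := by
  have hBpos : 0 < ‖b‖ := norm_pos_iff.mpr hb
  set B := ‖b‖ with hB
  set σ : ℕ → ℝ := fun n => ((n : ℝ) / (n + 1)) * (Real.pi / B) with hσ
  have hσmono : StrictMono σ := by
    intro n m hnm
    have : (n : ℝ) / (n + 1) < (m : ℝ) / (m + 1) := by
      rw [div_lt_div_iff₀ (by positivity) (by positivity)]
      have : (n : ℝ) < m := by exact_mod_cast hnm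
      nlinarith
    exact mul_lt_mul_of_pos_right this (by positivity)
  have hσmem : ∀ n, σ n ∈ Set.Ico (0 : ℝ) (Real.pi / B) := by
    intro n
    have h1 : (0 : ℝ) ≤ (n : ℝ) / (n + 1) := by positivity
    have h2 : (n : ℝ) / (n + 1) < 1 := by
      rw [div_lt_one (by positivity)]; linarith
    refine ⟨by positivity, ?_⟩
    calc σ n < 1 * (Real.pi / B) := mul_lt_mul_of_pos_right h2 (by positivity)
      _ = Real.pi / B := one_mul _
  have heinj : Function.Injective fun n : ℕ => Complex.exp (b * σ n) := by
    intro n m hnm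
    by_contra hne
    have hσne : σ n ≠ σ m := fun hh => hne (hσmono.injective hh)
    rw [Complex.exp_eq_exp_iff_exists_int] at hnm
    obtain ⟨k, hk⟩ := hnm
    have hk' : b * ((σ n : ℂ) - (σ m : ℂ)) = k * (2 * Real.pi * Complex.I) := by
      ring_nf
      ring_nf at hk
      linear_combination hk
    have habs := congrArg (‖·‖) hk'
    rw [norm_mul, norm_mul, norm_mul, ← Complex.ofReal_sub, Complex.norm_real, Real.norm_eq_abs,
      Complex.norm_intCast, Complex.norm_I, norm_mul, Complex.norm_two,
      Complex.norm_real, Real.norm_eq_abs, abs_of_pos Real.pi_pos] at habs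
    have hk0 : k ≠ 0 := by
      intro h0
      rw [h0] at habs
      simp at habs
      rcases habs with h | h
      · exact hb h
      · exact hσne (sub_eq_zero.mp h)
    have hk1 : (1 : ℝ) ≤ |(k : ℝ)| := by
      have : (1 : ℤ) ≤ |k| := Int.one_le_abs hk0
      calc (1:ℝ) ≤ (|k| : ℤ) := by exact_mod_cast this
        _ = |(k : ℝ)| := by push_cast; simp
    have hlt : |σ n - σ m| < Real.pi / B := by
      obtain ⟨hn0, hnpi⟩ := hσmem n
      obtain ⟨hm0, hmpi⟩ := hσmem m
      rw [abs_sub_lt_iff]; constructor <;> linarith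
    have hlhs : B * |σ n - σ m| < Real.pi := by
      calc B * |σ n - σ m| < B * (Real.pi / B) := by
            exact mul_lt_mul_of_pos_left hlt hBpos
        _ = Real.pi := by field_simp
    rw [habs] at hlhs
    nlinarith [Real.pi_pos]
  apply Polynomial.eq_zero_of_infinite_isRoot
  exact Set.infinite_of_injective_forall_mem heinj fun n => h (σ n)

open Polynomial in
lemma aux_inj_affine (p : Polynomial ℂ)
    (hinj : Function.Injective fun z : ℂ => p.eval z) :
    ∃ a c : ℂ, a ≠ 0 ∧ ∀ z : ℂ, p.eval z = a * z + c := by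
  have hdeg : p.natDegree ≤ 1 := by
    by_contra hn
    push_neg at hn
    set n := p.natDegree with hnd
    set q := p - C (p.eval 0) with hq
    have hq0 : q ≠ 0 := by
      intro h0
      have hp : p = C (p.eval 0) := by rwa [sub_eq_zero] at h0
      have : (0 : ℂ) = 1 := hinj (by rw [hp]; simp)
      norm_num at this
    have hqd : q.natDegree = n := natDegree_sub_C
    have hsplit := IsAlgClosed.splits q
    have hroots : q.roots = Multiset.replicate n 0 := by
      rw [Multiset.eq_replicate]
      constructor
      · rw [← hqd]; exact (splits_iff_card_roots.mp hsplit)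
      · intro x hx
        have hx' : q.eval x = 0 := (isRoot_of_mem_roots hx)
        have : p.eval x = p.eval 0 := by
          have := hx'
          simp only [hq, eval_sub, eval_C, sub_eq_zero] at this
          exact this
        exact hinj this
    have hqeq := hsplit.eq_prod_roots
    rw [hroots, Multiset.map_replicate, Multiset.prod_replicate] at hqeq
    simp only [map_zero, sub_zero] at hqeq
    have hζ := Complex.isPrimitiveRoot_exp n (by omega)
    have hζn : (Complex.exp (2 * Real.pi * Complex.I / n)) ^ n = 1 := hζ.pow_eq_one
    have hζ1 : (Complex.exp (2 * Real.pi * Complex.I / n)) ≠ 1 := hζ.ne_one (by omega)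
    set ζ := Complex.exp (2 * Real.pi * Complex.I / n)
    have hpζ : p.eval ζ = p.eval 1 := by
      have e1 : q.eval ζ = q.leadingCoeff * ζ ^ n := by rw [hqeq]; simp
      have e2 : q.eval 1 = q.leadingCoeff * 1 ^ n := by rw [hqeq]; simp
      have : q.eval ζ = q.eval 1 := by rw [e1, e2, hζn, one_pow]
      simp only [hq, eval_sub, eval_C] at this
      linear_combination this
    exact hζ1 (hinj hpζ)
  have hrep := eq_X_add_C_of_natDegree_le_one hdeg
  refine ⟨p.coeff 1, p.coeff 0, ?_, ?_⟩
  · intro h0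
    have : ∀ z : ℂ, p.eval z = p.coeff 0 := by
      intro z; conv_lhs => rw [hrep]
      simp [h0]
    have h01 : p.eval 0 = p.eval 1 := by rw [this 0, this 1]
    have := hinj h01
    norm_num at this
  · intro z; conv_lhs => rw [hrep]; simp

open Polynomial in
lemma aux_nowhere_zero (p : Polynomial ℂ) (h : ∀ z : ℂ, p.eval z ≠ 0) :
    ∃ q : ℂ, q ≠ 0 ∧ ∀ z : ℂ, p.eval z = q := by
  have hdeg : p.degree ≤ 0 := by
    by_contra hd
    push_neg at hd
    obtain ⟨z, hz⟩ := Complex.exists_root hd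
    exact h z hz
  refine ⟨p.coeff 0, ?_, ?_⟩
  · have := h 0
    rwa [show p.eval 0 = p.coeff 0 by rw [eq_C_of_degree_le_zero hdeg]; simp] at this
  · intro z; rw [eq_C_of_degree_le_zero hdeg]; simp

lemma aux_eval_eval₂ (P : MvPolynomial (Fin 2) ℂ) (v : Fin 2 → Polynomial ℂ) (z : ℂ) :
    Polynomial.eval z (MvPolynomial.eval₂ Polynomial.C v P) =
      MvPolynomial.eval (fun i => Polynomial.eval z (v i)) P := by
  have := MvPolynomial.eval₂_comp_left (Polynomial.evalRingHom z) Polynomial.C v P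
  simp only [Polynomial.coe_evalRingHom] at this
  rw [this]
  have hc : (Polynomial.evalRingHom z).comp Polynomial.C = RingHom.id ℂ := by
    ext x; simp
  rw [hc]
  rfl



open MvPolynomial

/-- A one-parameter group `R_t` of polynomial automorphisms of `ℂ²` commuting with
every `S_s(z₁,z₂) = (z₁, e^{bs}z₂)` (`b ≠ 0`) has the form
`R_t(z₁,z₂) = (a(t)z₁ + c(t), q(t)z₂)` with `a(t), q(t) ∈ ℂ*`. -/
theorem statement16 (b : ℂ) (hb : b ≠ 0) (R : ℝ → ℂ × ℂ → ℂ × ℂ)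
    (hgrp : ∀ (s t : ℝ) (z : ℂ × ℂ), R (t + s) z = R t (R s z))
    (hid : ∀ z : ℂ × ℂ, R 0 z = z)
    (hbij : ∀ t : ℝ, Function.Bijective (R t))
    (hpoly : ∀ t : ℝ, ∃ P₁ P₂ : MvPolynomial (Fin 2) ℂ, ∀ z : ℂ × ℂ,
      R t z = (MvPolynomial.eval ![z.1, z.2] P₁, MvPolynomial.eval ![z.1, z.2] P₂))
    (hcomm : ∀ (s t : ℝ) (z : ℂ × ℂ),
      R t (z.1, Complex.exp (b * s) * z.2) =
        ((R t z).1, Complex.exp (b * s) * (R t z).2)) :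
    ∀ t : ℝ, ∃ a c q : ℂ, a ≠ 0 ∧ q ≠ 0 ∧
      ∀ z : ℂ × ℂ, R t z = (a * z.1 + c, q * z.2) := by
  intro t
  obtain ⟨P₁, P₂, hP⟩ := hpoly t
  have hPa : ∀ u v : ℂ, R t (u, v) = (eval ![u, v] P₁, eval ![u, v] P₂) :=
    fun u v => hP (u, v)
  have hvec : ∀ (z₁ z : ℂ),
      (fun i => Polynomial.eval z (![Polynomial.C z₁, Polynomial.X] i)) = ![z₁, z] := by
    intro z₁ z; funext i; fin_cases i <;> simp
  have hvec2 : ∀ z : ℂ,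
      (fun i => Polynomial.eval z (![Polynomial.X, Polynomial.C 1] i)) = ![z, (1:ℂ)] := by
    intro z; funext i; fin_cases i <;> simp
  -- commuting identities at (z₁, 1)
  have hfst : ∀ (s : ℝ) (z₁ : ℂ),
      eval ![z₁, Complex.exp (b * s)] P₁ = eval ![z₁, (1:ℂ)] P₁ := by
    intro s z₁
    have h1 : R t (z₁, Complex.exp (b * s) * 1) =
        ((R t (z₁, 1)).1, Complex.exp (b * s) * (R t (z₁, 1)).2) := hcomm s t (z₁, 1)
    rw [hPa z₁ (Complex.exp (b * s) * 1), hPa z₁ 1] at h1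
    have := congrArg Prod.fst h1
    simp only [mul_one] at this
    exact this
  have hsnd : ∀ (s : ℝ) (z₁ : ℂ),
      eval ![z₁, Complex.exp (b * s)] P₂ = Complex.exp (b * s) * eval ![z₁, (1:ℂ)] P₂ := by
    intro s z₁
    have h1 : R t (z₁, Complex.exp (b * s) * 1) =
        ((R t (z₁, 1)).1, Complex.exp (b * s) * (R t (z₁, 1)).2) := hcomm s t (z₁, 1)
    rw [hPa z₁ (Complex.exp (b * s) * 1), hPa z₁ 1] at h1
    have := congrArg Prod.snd h1
    simp only [mul_one] at this
    exact this
  have claim1 : ∀ z₁ w : ℂ, eval ![z₁, w] P₁ = eval ![z₁, (1:ℂ)] P₁ := by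
    intro z₁ w
    set q : Polynomial ℂ :=
      MvPolynomial.eval₂ Polynomial.C ![Polynomial.C z₁, Polynomial.X] P₁ -
        Polynomial.C (eval ![z₁, (1:ℂ)] P₁) with hqdef
    have hq0 : q = 0 := by
      apply aux_exp_roots b hb
      intro s
      simp only [hqdef, Polynomial.eval_sub, Polynomial.eval_C, aux_eval_eval₂, hvec]
      rw [hfst s z₁]; ring
    have h2 := congrArg (Polynomial.eval w) hq0
    simp only [hqdef, Polynomial.eval_sub, Polynomial.eval_C, aux_eval_eval₂, hvec,
      Polynomial.eval_zero] at h2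
    linear_combination h2
  have claim2 : ∀ z₁ w : ℂ, eval ![z₁, w] P₂ = w * eval ![z₁, (1:ℂ)] P₂ := by
    intro z₁ w
    set q : Polynomial ℂ :=
      MvPolynomial.eval₂ Polynomial.C ![Polynomial.C z₁, Polynomial.X] P₂ -
        Polynomial.X * Polynomial.C (eval ![z₁, (1:ℂ)] P₂) with hqdef
    have hq0 : q = 0 := by
      apply aux_exp_roots b hb
      intro s
      simp only [hqdef, Polynomial.eval_sub, Polynomial.eval_mul, Polynomial.eval_X,
        Polynomial.eval_C, aux_eval_eval₂, hvec]
      rw [hsnd s z₁]; ring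
    have h2 := congrArg (Polynomial.eval w) hq0
    simp only [hqdef, Polynomial.eval_sub, Polynomial.eval_mul, Polynomial.eval_X,
      Polynomial.eval_C, aux_eval_eval₂, hvec, Polynomial.eval_zero] at h2
    linear_combination h2
  set F : ℂ → ℂ := fun z₁ => eval ![z₁, (1:ℂ)] P₁ with hF
  set G : ℂ → ℂ := fun z₁ => eval ![z₁, (1:ℂ)] P₂ with hG
  have hRt : ∀ z : ℂ × ℂ, R t z = (F z.1, z.2 * G z.1) := by
    intro z
    rw [hP z, claim1 z.1 z.2, claim2 z.1 z.2]
  -- F is injective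
  have hFinj : Function.Injective F := by
    intro x y hxy
    have hx : R t (x, 0) = (F x, 0) := by rw [hRt (x, 0)]; simp
    have hy : R t (y, 0) = (F y, 0) := by rw [hRt (y, 0)]; simp
    have := (hbij t).injective (hx.trans (by rw [hxy, ← hy]))
    exact congrArg Prod.fst this
  -- F as a one-variable polynomial
  have hFeval : ∀ z : ℂ,
      Polynomial.eval z (MvPolynomial.eval₂ Polynomial.C ![Polynomial.X, Polynomial.C 1] P₁)
        = F z := by
    intro z; rw [aux_eval_eval₂, hvec2]
  obtain ⟨a, c, ha, hac⟩ := aux_inj_affine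
    (MvPolynomial.eval₂ Polynomial.C ![Polynomial.X, Polynomial.C 1] P₁)
    (by intro x y hxy
        simp only [hFeval] at hxy
        exact hFinj hxy)
  have hFform : ∀ z : ℂ, F z = a * z + c := fun z => by rw [← hFeval z, hac z]
  -- G is nowhere zero
  have hGne : ∀ z : ℂ, G z ≠ 0 := by
    intro x h0
    have hx : R t (x, 1) = (F x, 0) := by rw [hRt (x, 1)]; simp [h0]
    have hy : R t (x, 0) = (F x, 0) := by rw [hRt (x, 0)]; simp
    have := (hbij t).injective (hx.trans hy.symm)
    have h01 : (1 : ℂ) = 0 := congrArg Prod.snd this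
    norm_num at h01
  have hGeval : ∀ z : ℂ,
      Polynomial.eval z (MvPolynomial.eval₂ Polynomial.C ![Polynomial.X, Polynomial.C 1] P₂)
        = G z := by
    intro z; rw [aux_eval_eval₂, hvec2]
  obtain ⟨q, hq, hqc⟩ := aux_nowhere_zero
    (MvPolynomial.eval₂ Polynomial.C ![Polynomial.X, Polynomial.C 1] P₂)
    (by intro z; rw [hGeval]; exact hGne z)
  have hGform : ∀ z : ℂ, G z = q := fun z => by rw [← hGeval z, hqc z]
  refine ⟨a, c, q, ha, hq, ?_⟩
  intro z
  rw [hRt z, hFform z.1, hGform z.1, mul_comm z.2 q]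
end

section
/- Let S_s(z₁,z₂) = (z₁ + s, e^{bs}z₂) with b ∈ ℂ*, and let R_t be a one-parameter group of polynomial automorphisms of ℂ² commuting with all S_s. Then R_t(z₁, z₂) = (z₁ + c·t, e^{λt}·z₂) for some constants c, λ ∈ ℂ. -/
open MvPolynomial
open Polynomial Finset

section Aux

/-- A one-variable polynomial equal to `C * exp(β s)` on the real line, with `β ≠ 0`,
forces `C = 0`. -/
lemma aux_polyExp (Q : Polynomial ℂ) (β C : ℂ) (hβ : β ≠ 0)
    (h : ∀ s : ℝ, Q.eval (s : ℂ) = C * Complex.exp (β * s)) : C = 0 := by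
  have key : ∀ n : ℕ, ∀ s : ℝ,
      ((⇑Polynomial.derivative)^[n] Q).eval (s : ℂ) = C * β ^ n * Complex.exp (β * s) := by
    intro n
    induction n with
    | zero => intro s; simpa using h s
    | succ n ih =>
      intro s
      have hf : HasDerivAt (fun u : ℝ => ((⇑Polynomial.derivative)^[n] Q).eval (u : ℂ))
          ((Polynomial.derivative ((⇑Polynomial.derivative)^[n] Q)).eval (s : ℂ)) s :=
        (Polynomial.hasDerivAt _ _).comp_ofReal
      have hg : HasDerivAt (fun u : ℝ => C * β ^ n * Complex.exp (β * u))
          (C * β ^ n * (β * Complex.exp (β * s))) s := by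
        have h1 : HasDerivAt (fun z : ℂ => Complex.exp (β * z)) (β * Complex.exp (β * s)) (s : ℂ) := by
          have := (Complex.hasDerivAt_exp (β * s)).comp (s : ℂ)
            ((hasDerivAt_id (s : ℂ)).const_mul β)
          exact this.congr_deriv (by ring)
        simpa [mul_assoc] using (h1.comp_ofReal).const_mul (C * β ^ n)
      have hfg : (fun u : ℝ => ((⇑Polynomial.derivative)^[n] Q).eval (u : ℂ))
          = fun u : ℝ => C * β ^ n * Complex.exp (β * u) := funext fun u => ih u
      have := (hfg ▸ hf).unique hg
      rw [Function.iterate_succ_apply', this]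
      ring
  have hdeg : ((⇑Polynomial.derivative)^[Q.natDegree + 1] Q) = 0 :=
    Polynomial.iterate_derivative_eq_zero (Nat.lt_succ_self _)
  have := key (Q.natDegree + 1) 0
  rw [hdeg] at this
  simp at this
  rcases this with h0 | h0
  · exact h0
  · exact absurd h0 hβ

/-- A polynomial over ℂ equal to a fixed value on all reals is that constant everywhere. -/
lemma aux_polyConst (Q : Polynomial ℂ) (C : ℂ) (h : ∀ s : ℝ, Q.eval (s : ℂ) = C) :
    ∀ z : ℂ, Q.eval z = C := by
  intro z
  have hz : Q - Polynomial.C C = 0 := by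
    apply Polynomial.eq_zero_of_infinite_isRoot
    apply Set.Infinite.mono (s := Set.range (Complex.ofReal))
    · rintro x ⟨s, rfl⟩
      simp [Polynomial.IsRoot, h s]
    · exact Set.infinite_range_of_injective Complex.ofReal_injective
  have := congrArg (Polynomial.eval z) hz
  simpa [sub_eq_zero] using this

/-- A polynomial over ℂ equal to `s + C` on all reals equals `z + C` everywhere. -/
lemma aux_polyId (Q : Polynomial ℂ) (C : ℂ) (h : ∀ s : ℝ, Q.eval (s : ℂ) = s + C) :
    ∀ z : ℂ, Q.eval z = z + C := by
  intro z
  have hz : Q - (Polynomial.X + Polynomial.C C) = 0 := by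
    apply Polynomial.eq_zero_of_infinite_isRoot
    apply Set.Infinite.mono (s := Set.range (Complex.ofReal))
    · rintro x ⟨s, rfl⟩
      simp [Polynomial.IsRoot, h s]
    · exact Set.infinite_range_of_injective Complex.ofReal_injective
  have := congrArg (Polynomial.eval z) hz
  simpa [sub_eq_zero] using this

/-- Equality of coefficients from equality of finite power sums over ℂ. -/
lemma aux_coeffEq (n : ℕ) (a c : ℕ → ℂ)
    (h : ∀ y : ℂ, ∑ k ∈ range n, a k * y ^ k = ∑ k ∈ range n, c k * y ^ k) :
    ∀ k < n, a k = c k := by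
  intro k hk
  have hpoly : (∑ j ∈ range n, Polynomial.C (a j) * Polynomial.X ^ j)
      = ∑ j ∈ range n, Polynomial.C (c j) * Polynomial.X ^ j := by
    apply Polynomial.funext
    intro r
    simp only [Polynomial.eval_finset_sum, Polynomial.eval_mul, Polynomial.eval_C,
      Polynomial.eval_pow, Polynomial.eval_X]
    exact h r
  have := congrArg (fun p => Polynomial.coeff p k) hpoly
  simpa [Polynomial.finset_sum_coeff, Polynomial.coeff_C_mul, Polynomial.coeff_X_pow,
    Finset.sum_ite_eq' (range n), hk] using this


noncomputable def toQ (P : MvPolynomial (Fin 2) ℂ) : Polynomial (Polynomial ℂ) :=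
  MvPolynomial.aeval ![Polynomial.C Polynomial.X, Polynomial.X] P

lemma aux_bridge (P : MvPolynomial (Fin 2) ℂ) (z₁ z₂ : ℂ) :
    MvPolynomial.eval ![z₁, z₂] P
      = ∑ k ∈ range ((toQ P).natDegree + 1), ((toQ P).coeff k).eval z₁ * z₂ ^ k := by
  have h1 : MvPolynomial.eval ![z₁, z₂] P
      = ((toQ P).map (Polynomial.evalRingHom z₁)).eval z₂ := by
    induction P using MvPolynomial.induction_on with
    | C a => simp [toQ]
    | add p q hp hq => simp only [toQ, map_add, Polynomial.eval_add] at *; rw [hp, hq, Polynomial.map_add, Polynomial.eval_add]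
    | mul_X p i hp =>
      fin_cases i <;>
        simp [toQ, map_mul, hp, Matrix.cons_val_zero, Matrix.cons_val_one]
  rw [h1, Polynomial.eval_eq_sum_range' (n := (toQ P).natDegree + 1)]
  · apply Finset.sum_congr rfl
    intro k _
    rw [Polynomial.coeff_map]
    rfl
  · exact lt_of_le_of_lt Polynomial.natDegree_map_le (Nat.lt_succ_self _)


lemma aux_second (b : ℂ) (hb : b ≠ 0) (P : MvPolynomial (Fin 2) ℂ)
    (hFE : ∀ (s : ℝ) (z₁ z₂ : ℂ),
      MvPolynomial.eval ![z₁ + s, Complex.exp (b * s) * z₂] P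
        = Complex.exp (b * s) * MvPolynomial.eval ![z₁, z₂] P) :
    ∃ m : ℂ, ∀ z₁ z₂ : ℂ, MvPolynomial.eval ![z₁, z₂] P = m * z₂ := by
  set N := (toQ P).natDegree with hN
  set r : ℕ → Polynomial ℂ := fun k => (toQ P).coeff k with hr
  -- coefficient relation
  have hcoeff : ∀ k < N + 1, ∀ (s : ℝ) (z₁ : ℂ),
      (r k).eval (z₁ + s) * Complex.exp (b * s) ^ k
        = Complex.exp (b * s) * (r k).eval z₁ := by
    intro k hk s z₁
    refine aux_coeffEq (N + 1)
      (fun k => (r k).eval (z₁ + s) * Complex.exp (b * s) ^ k)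
      (fun k => Complex.exp (b * s) * (r k).eval z₁) ?_ k hk
    intro y
    have h1 := hFE s z₁ y
    rw [aux_bridge, aux_bridge] at h1
    rw [Finset.mul_sum] at h1
    calc ∑ k ∈ range (N + 1), (r k).eval (z₁ + s) * Complex.exp (b * s) ^ k * y ^ k
        = ∑ k ∈ range (N + 1), (r k).eval (z₁ + s) * (Complex.exp (b * s) * y) ^ k := by
          apply Finset.sum_congr rfl; intro k _; rw [mul_pow]; ring
      _ = ∑ k ∈ range (N + 1), Complex.exp (b * s) * ((r k).eval z₁ * y ^ k) := h1
      _ = ∑ k ∈ range (N + 1), Complex.exp (b * s) * (r k).eval z₁ * y ^ k := by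
          apply Finset.sum_congr rfl; intro k _; ring
  -- k ≠ 1 coefficients vanish
  have hvanish : ∀ k < N + 1, k ≠ 1 → ∀ z₁ : ℂ, (r k).eval z₁ = 0 := by
    intro k hk hk1 z₁
    have hβ : b * (1 - (k : ℂ)) ≠ 0 := by
      apply mul_ne_zero hb
      intro hcon
      apply hk1
      have : (k : ℂ) = 1 := by linear_combination -hcon
      exact_mod_cast this
    refine aux_polyExp ((r k).comp (Polynomial.X + Polynomial.C z₁))
      (b * (1 - (k : ℂ))) ((r k).eval z₁) hβ ?_
    intro s
    rw [Polynomial.eval_comp]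
    simp only [Polynomial.eval_add, Polynomial.eval_X, Polynomial.eval_C]
    have hrel := hcoeff k hk s z₁
    have hne : Complex.exp ((k : ℂ) * (b * s)) ≠ 0 := Complex.exp_ne_zero _
    have hpow : Complex.exp (b * s) ^ k = Complex.exp ((k : ℂ) * (b * s)) :=
      (Complex.exp_nat_mul _ k).symm
    rw [hpow] at hrel
    have : (r k).eval (z₁ + s) = (r k).eval z₁ *
        (Complex.exp (b * s) * (Complex.exp ((k : ℂ) * (b * s)))⁻¹) := by
      rw [← mul_assoc, eq_mul_inv_iff_mul_eq₀ hne]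
      linear_combination hrel
    rw [add_comm (s : ℂ) z₁, this, ← Complex.exp_neg, ← Complex.exp_add]
    ring_nf
  -- value of r 1 is constant
  have hconst1 : 1 < N + 1 → ∀ z : ℂ, (r 1).eval z = (r 1).eval 0 := by
    intro h1
    apply aux_polyConst
    intro s
    have hrel := hcoeff 1 h1 s 0
    simp only [pow_one] at hrel
    have h2 : Complex.exp (b * s) * (r 1).eval ((0 : ℂ) + (s : ℂ))
        = Complex.exp (b * s) * (r 1).eval 0 := by linear_combination hrel
    have := mul_left_cancel₀ (Complex.exp_ne_zero (b * s)) h2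
    simpa using this
  classical
  refine ⟨if h1 : 1 < N + 1 then (r 1).eval 0 else 0, ?_⟩
  intro z₁ z₂
  rw [aux_bridge]
  have hsum : ∀ k ∈ range (N + 1), (r k).eval z₁ * z₂ ^ k
      = if k = 1 then (if h1 : 1 < N + 1 then (r 1).eval 0 else 0) * z₂ ^ k else 0 := by
    intro k hk
    rw [Finset.mem_range] at hk
    by_cases hk1 : k = 1
    · subst hk1
      rw [if_pos rfl, dif_pos hk, hconst1 hk z₁]
    · rw [if_neg hk1, hvanish k hk hk1 z₁, zero_mul]
  rw [Finset.sum_congr rfl hsum, Finset.sum_ite_eq' (range (N + 1))]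
  by_cases h1 : 1 < N + 1
  · rw [if_pos (Finset.mem_range.mpr h1), dif_pos h1, pow_one]
  · rw [if_neg (fun hc => h1 (Finset.mem_range.mp hc)), dif_neg h1, zero_mul]

lemma aux_first (b : ℂ) (hb : b ≠ 0) (P : MvPolynomial (Fin 2) ℂ)
    (hFE : ∀ (s : ℝ) (z₁ z₂ : ℂ),
      MvPolynomial.eval ![z₁ + s, Complex.exp (b * s) * z₂] P
        = (s : ℂ) + MvPolynomial.eval ![z₁, z₂] P) :
    ∃ c₀ : ℂ, ∀ z₁ z₂ : ℂ, MvPolynomial.eval ![z₁, z₂] P = z₁ + c₀ := by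
  set N := (toQ P).natDegree with hN
  set r : ℕ → Polynomial ℂ := fun k => (toQ P).coeff k with hr
  have hcoeff : ∀ k < N + 1, ∀ (s : ℝ) (z₁ : ℂ),
      (r k).eval (z₁ + s) * Complex.exp (b * s) ^ k
        = (if k = 0 then (s : ℂ) + (r 0).eval z₁ else (r k).eval z₁) := by
    intro k hk s z₁
    refine aux_coeffEq (N + 1)
      (fun k => (r k).eval (z₁ + s) * Complex.exp (b * s) ^ k)
      (fun k => if k = 0 then (s : ℂ) + (r 0).eval z₁ else (r k).eval z₁) ?_ k hk
    intro y
    have h1 := hFE s z₁ y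
    rw [aux_bridge, aux_bridge] at h1
    calc ∑ k ∈ range (N + 1), (r k).eval (z₁ + s) * Complex.exp (b * s) ^ k * y ^ k
        = ∑ k ∈ range (N + 1), (r k).eval (z₁ + s) * (Complex.exp (b * s) * y) ^ k := by
          apply Finset.sum_congr rfl; intro k _; rw [mul_pow]; ring
      _ = (s : ℂ) + ∑ k ∈ range (N + 1), (r k).eval z₁ * y ^ k := h1
      _ = ∑ k ∈ range (N + 1),
          (if k = 0 then (s : ℂ) + (r 0).eval z₁ else (r k).eval z₁) * y ^ k := by
          have hsplit : ∀ k ∈ range (N + 1),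
              (if k = 0 then (s : ℂ) + (r 0).eval z₁ else (r k).eval z₁) * y ^ k
                = (if k = 0 then (s : ℂ) * y ^ k else 0) + (r k).eval z₁ * y ^ k := by
            intro k _
            by_cases hk0 : k = 0
            · subst hk0; simp only [if_true, eq_self_iff_true]; ring_nf
            · simp [hk0]
          rw [Finset.sum_congr rfl hsplit, Finset.sum_add_distrib,
            Finset.sum_ite_eq' (range (N + 1)),
            if_pos (Finset.mem_range.mpr (Nat.succ_pos N)), pow_zero, mul_one]
  have hvanish : ∀ k < N + 1, k ≠ 0 → ∀ z₁ : ℂ, (r k).eval z₁ = 0 := by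
    intro k hk hk0 z₁
    have hβ : -(b * (k : ℂ)) ≠ 0 := by
      simp only [neg_ne_zero]
      exact mul_ne_zero hb (Nat.cast_ne_zero.mpr hk0)
    refine aux_polyExp ((r k).comp (Polynomial.X + Polynomial.C z₁))
      (-(b * (k : ℂ))) ((r k).eval z₁) hβ ?_
    intro s
    rw [Polynomial.eval_comp]
    simp only [Polynomial.eval_add, Polynomial.eval_X, Polynomial.eval_C]
    have hrel := hcoeff k hk s z₁
    rw [if_neg hk0] at hrel
    have hpow : Complex.exp (b * s) ^ k = Complex.exp ((k : ℂ) * (b * s)) :=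
      (Complex.exp_nat_mul _ k).symm
    rw [hpow] at hrel
    have : (r k).eval (z₁ + s) = (r k).eval z₁ * (Complex.exp ((k : ℂ) * (b * s)))⁻¹ := by
      rw [eq_mul_inv_iff_mul_eq₀ (Complex.exp_ne_zero _)]
      linear_combination hrel
    rw [add_comm (s : ℂ) z₁, this, ← Complex.exp_neg]
    ring_nf
  have h0 : ∀ z : ℂ, (r 0).eval z = z + (r 0).eval 0 := by
    apply aux_polyId
    intro s
    have hrel := hcoeff 0 (Nat.succ_pos N) s 0
    simpa using hrel
  refine ⟨(r 0).eval 0, ?_⟩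
  intro z₁ z₂
  rw [aux_bridge]
  have hsum : ∀ k ∈ range (N + 1), (r k).eval z₁ * z₂ ^ k
      = if k = 0 then (z₁ + (r 0).eval 0) * z₂ ^ k else 0 := by
    intro k hk
    rw [Finset.mem_range] at hk
    by_cases hk0 : k = 0
    · subst hk0; rw [if_pos rfl, h0 z₁]
    · rw [if_neg hk0, hvanish k hk hk0 z₁, zero_mul]
  rw [Finset.sum_congr rfl hsum, Finset.sum_ite_eq' (range (N + 1)),
    if_pos (Finset.mem_range.mpr (Nat.succ_pos N)), pow_zero, mul_one]

end Aux

/-- A one-parameter group `R_t` of polynomial automorphisms of `ℂ²` commuting with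
every `S_s(z₁,z₂) = (z₁ + s, e^{bs}z₂)` (`b ≠ 0`) has the form
`R_t(z₁,z₂) = (z₁ + c t, e^{λt} z₂)` for some constants `c, λ ∈ ℂ`. -/

theorem statement17 (b : ℂ) (hb : b ≠ 0) (R : ℝ → ℂ × ℂ → ℂ × ℂ)
    (hgrp : ∀ (s t : ℝ) (z : ℂ × ℂ), R (t + s) z = R t (R s z))
    (hid : ∀ z : ℂ × ℂ, R 0 z = z)
    (hbij : ∀ t : ℝ, Function.Bijective (R t))
    (hpoly : ∀ t : ℝ, ∃ P₁ P₂ : MvPolynomial (Fin 2) ℂ, ∀ z : ℂ × ℂ,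
      R t z = (MvPolynomial.eval ![z.1, z.2] P₁, MvPolynomial.eval ![z.1, z.2] P₂))
    (hdiff : ∀ z : ℂ × ℂ, Differentiable ℝ fun t => R t z)
    (hcomm : ∀ (s t : ℝ) (z : ℂ × ℂ),
      R t (z.1 + (s : ℂ), Complex.exp (b * s) * z.2) =
        ((R t z).1 + (s : ℂ), Complex.exp (b * s) * (R t z).2)) :
    ∃ c lam : ℂ, ∀ (t : ℝ) (z : ℂ × ℂ),
      R t z = (z.1 + c * t, Complex.exp (lam * t) * z.2) := by
  -- Step 1: structure of R t for each fixed t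
  set cf : ℝ → ℂ := fun t => (R t (0, 0)).1 with hcf
  set mf : ℝ → ℂ := fun t => (R t (0, 1)).2 with hmf
  have hform : ∀ (t : ℝ) (z : ℂ × ℂ), R t z = (z.1 + cf t, mf t * z.2) := by
    intro t
    obtain ⟨P₁, P₂, hP⟩ := hpoly t
    have hFE1 : ∀ (s : ℝ) (z₁ z₂ : ℂ),
        MvPolynomial.eval ![z₁ + s, Complex.exp (b * s) * z₂] P₁
          = (s : ℂ) + MvPolynomial.eval ![z₁, z₂] P₁ := by
      intro s z₁ z₂
      have h := hcomm s t (z₁, z₂)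
      rw [hP (z₁, z₂), hP ((z₁, z₂).1 + (s : ℂ), Complex.exp (b * s) * (z₁, z₂).2)] at h
      simp only [Prod.mk.injEq] at h
      rw [h.1]; ring
    have hFE2 : ∀ (s : ℝ) (z₁ z₂ : ℂ),
        MvPolynomial.eval ![z₁ + s, Complex.exp (b * s) * z₂] P₂
          = Complex.exp (b * s) * MvPolynomial.eval ![z₁, z₂] P₂ := by
      intro s z₁ z₂
      have h := hcomm s t (z₁, z₂)
      rw [hP (z₁, z₂), hP ((z₁, z₂).1 + (s : ℂ), Complex.exp (b * s) * (z₁, z₂).2)] at h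
      simp only [Prod.mk.injEq] at h
      exact h.2
    obtain ⟨c₀, hc₀⟩ := aux_first b hb P₁ hFE1
    obtain ⟨m, hm⟩ := aux_second b hb P₂ hFE2
    have hcv : cf t = c₀ := by
      rw [hcf]; simp only; rw [hP (0, 0)]; simp [hc₀ 0 0]
    have hmv : mf t = m := by
      rw [hmf]; simp only; rw [hP (0, 1)]; simp [hm 0 1]
    intro z
    rw [hP z, hcv, hmv, hc₀ z.1 z.2, hm z.1 z.2]
  -- Step 2: group structure of cf, mf
  have hc0 : cf 0 = 0 := by have := hform 0 (0, 0); rw [hid (0,0)] at this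
                            simpa [cf] using congrArg Prod.fst this.symm
  have hm0 : mf 0 = 1 := by have := hform 0 (0, 1); rw [hid (0,1)] at this
                            simpa [mf] using congrArg Prod.snd this.symm
  have hcadd : ∀ t s : ℝ, cf (t + s) = cf t + cf s := by
    intro t s
    have h1 := hgrp s t (0, 0)
    rw [hform (t + s) (0, 0), hform s (0, 0), hform t ((0 : ℂ) + cf s, mf s * 0)] at h1
    have := congrArg Prod.fst h1
    simp only at this
    linear_combination this
  have hmadd : ∀ t s : ℝ, mf (t + s) = mf t * mf s := by
    intro t s
    have h1 := hgrp s t (0, 1)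
    rw [hform (t + s) (0, 1), hform s (0, 1), hform t ((0 : ℂ) + cf s, mf s * 1)] at h1
    have := congrArg Prod.snd h1
    simpa using this
  -- differentiability
  have hcdiff : Differentiable ℝ cf := (hdiff (0, 0)).fst
  have hmdiff : Differentiable ℝ mf := (hdiff (0, 1)).snd
  -- Step 3: solve the functional equations
  set c := deriv cf 0 with hcdef
  set lam := deriv mf 0 with hlamdef
  have hcderiv : ∀ t : ℝ, HasDerivAt cf c t := by
    intro t
    have hf : HasDerivAt (fun s : ℝ => cf (t + s)) (deriv cf t) 0 := by
      have := (hcdiff (t + 0)).hasDerivAt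
      exact HasDerivAt.comp_const_add t 0 (by simpa using this)
    have hg : HasDerivAt (fun s : ℝ => cf t + cf s) c 0 :=
      ((hcdiff 0).hasDerivAt).const_add (cf t)
    have heq : (fun s : ℝ => cf (t + s)) = fun s : ℝ => cf t + cf s :=
      funext fun s => hcadd t s
    have : deriv cf t = c := (heq ▸ hf).unique hg
    exact this ▸ (hcdiff t).hasDerivAt
  have hclin : ∀ t : ℝ, cf t = c * t := by
    intro t
    have hconst : ∀ x : ℝ, deriv (fun u : ℝ => cf u - c * u) x = 0 := by
      intro x
      have : HasDerivAt (fun u : ℝ => cf u - c * u) (c - c) x := by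
        have h2 : HasDerivAt (fun u : ℝ => c * (u : ℂ)) c x := by
          simpa using (Complex.ofRealCLM.hasDerivAt (x := x)).const_mul c
        exact (hcderiv x).sub h2
      simpa using this.deriv
    have hd : Differentiable ℝ (fun u : ℝ => cf u - c * u) := by
      apply Differentiable.sub hcdiff
      exact fun x => (Complex.ofRealCLM.differentiable x).const_mul c
    have h3 := is_const_of_deriv_eq_zero hd hconst t 0
    rw [hc0] at h3
    push_cast at h3
    linear_combination h3
  have hmderiv : ∀ t : ℝ, HasDerivAt mf (mf t * lam) t := by
    intro t
    have hf : HasDerivAt (fun s : ℝ => mf (t + s)) (deriv mf t) 0 := by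
      have := (hmdiff (t + 0)).hasDerivAt
      exact HasDerivAt.comp_const_add t 0 (by simpa using this)
    have hg : HasDerivAt (fun s : ℝ => mf t * mf s) (mf t * lam) 0 :=
      ((hmdiff 0).hasDerivAt).const_mul (mf t)
    have heq : (fun s : ℝ => mf (t + s)) = fun s : ℝ => mf t * mf s :=
      funext fun s => hmadd t s
    have : deriv mf t = mf t * lam := (heq ▸ hf).unique hg
    exact this ▸ (hmdiff t).hasDerivAt
  have hmexp : ∀ t : ℝ, mf t = Complex.exp (lam * t) := by
    have hgderiv : ∀ u : ℝ,
        HasDerivAt (fun u : ℝ => Complex.exp (-(lam * u)) * mf u) 0 u := by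
      intro u
      have hinner : HasDerivAt (fun z : ℂ => -(lam * z)) (-lam) (u : ℂ) := by
        exact ((hasDerivAt_id (u : ℂ)).const_mul lam).neg.congr_deriv (by ring)
      have hexp : HasDerivAt (fun z : ℂ => Complex.exp (-(lam * z)))
          (Complex.exp (-(lam * u)) * -lam) (u : ℂ) :=
        (Complex.hasDerivAt_exp (-(lam * u))).comp (u : ℂ) hinner
      have h1 : HasDerivAt (fun u : ℝ => Complex.exp (-(lam * u)))
          (Complex.exp (-(lam * u)) * -lam) u := hexp.comp_ofReal
      have := h1.mul (hmderiv u)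
      exact this.congr_deriv (by ring)
    have hgdiff : Differentiable ℝ (fun u : ℝ => Complex.exp (-(lam * u)) * mf u) :=
      fun x => (hgderiv x).differentiableAt
    intro t
    have h3 := is_const_of_deriv_eq_zero hgdiff (fun x => (hgderiv x).deriv) t 0
    simp only [Complex.ofReal_zero, mul_zero, neg_zero, Complex.exp_zero, one_mul, hm0] at h3
    have hne : Complex.exp (-(lam * t)) ≠ 0 := Complex.exp_ne_zero _
    rw [neg_mul_eq_neg_mul] at *
    have : mf t = (Complex.exp (-(lam * (t : ℂ))))⁻¹ := by
      field_simp at h3 ⊢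
      linear_combination h3
    rw [this, ← Complex.exp_neg, neg_neg]
  exact ⟨c, lam, fun t z => by rw [hform t z, hclin t, hmexp t]⟩
end
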